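/- For every integer k ≥ 4, the sum ∑_{i=2}^{k-2} k(k-1)/(i(i-1)(k-i)(k-i-1)) is at most 9/2. -/

import Mathlib

open Finset

lemma tele_aux (n : ℕ) (hn : 2 ≤ n) :
    ∑ a ∈ Icc 2 n, (1 : ℚ) / ((a : ℚ) * ((a : ℚ) - 1)) = 1 - 1 / (n : ℚ) := by
  induction n with
  | zero => omega
  | succ n ih =>
    rcases Nat.lt_or_ge n 2 with h | h
    · interval_cases n
      · omega
      · norm_num
    · rw [Finset.sum_Icc_succ_top (by omega : 2 ≤ n + 1), ih h]
      have hn0 : (n : ℚ) ≠ 0 := by positivity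
      have hn1 : (n : ℚ) + 1 ≠ 0 := by positivity
      push_cast
      field_simp
      ring_nf
      rw [mul_inv_cancel₀ hn0]
      ring

lemma harm_aux (n : ℕ) (hn : 2 ≤ n) :
    ∑ a ∈ Icc 2 n, (1 : ℚ) / ((a : ℚ) - 1) ≤ (n : ℚ) / 2 := by
  induction n with
  | zero => omega
  | succ n ih =>
    rcases Nat.lt_or_ge n 2 with h | h
    · interval_cases n
      · omega
      · norm_num
    · rw [Finset.sum_Icc_succ_top (by omega : 2 ≤ n + 1)]
      have h2 : (2 : ℚ) ≤ (n : ℚ) := by exact_mod_cast h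
      have : (1 : ℚ) / ((n : ℚ) + 1 - 1) ≤ 1 / 2 := by
        rw [div_le_div_iff₀ (by linarith) (by norm_num)]
        linarith
      have hih := ih h
      push_cast
      push_cast at hih
      linarith

lemma reflect_aux (k : ℕ) (hk : 4 ≤ k) (f : ℕ → ℚ) :
    ∑ i ∈ Icc 2 (k - 2), f (k - i) = ∑ i ∈ Icc 2 (k - 2), f i := by
  apply Finset.sum_nbij' (fun i => k - i) (fun i => k - i) <;>
    intro a ha <;> simp only [Finset.mem_Icc] at * <;> first | omega | (congr 1; omega)

theorem stmt_0 (k : ℕ) (hk : 4 ≤ k) :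
    ∑ i ∈ Finset.Icc 2 (k - 2),
      ((k : ℚ) * ((k : ℚ) - 1)) /
        ((i : ℚ) * ((i : ℚ) - 1) * ((k : ℚ) - (i : ℚ)) * ((k : ℚ) - (i : ℚ) - 1))
      ≤ 9 / 2 := by
  have hk4 : (4 : ℚ) ≤ (k : ℚ) := by exact_mod_cast hk
  set g : ℕ → ℚ := fun a =>
    1 / ((a : ℚ) * ((a : ℚ) - 1)) + (2 / ((k : ℚ) - 2)) * (1 / ((a : ℚ) - 1)) with hg
  have key : ∀ i ∈ Icc 2 (k - 2),
      ((k : ℚ) * ((k : ℚ) - 1)) /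
        ((i : ℚ) * ((i : ℚ) - 1) * ((k : ℚ) - (i : ℚ)) * ((k : ℚ) - (i : ℚ) - 1))
      = g i + g (k - i) := by
    intro i hi
    simp only [Finset.mem_Icc] at hi
    have hi2 : (2 : ℚ) ≤ (i : ℚ) := by exact_mod_cast hi.1
    have hik : (i : ℚ) ≤ (k : ℚ) - 2 := by
      have : i ≤ k - 2 := hi.2
      have : (i : ℚ) ≤ ((k - 2 : ℕ) : ℚ) := by exact_mod_cast this
      rwa [Nat.cast_sub (by omega)] at this
    have hcast : ((k - i : ℕ) : ℚ) = (k : ℚ) - (i : ℚ) := by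
      rw [Nat.cast_sub (by omega)]
    simp only [hg, hcast]
    have h1 : (i : ℚ) ≠ 0 := by linarith
    have h2 : (i : ℚ) - 1 ≠ 0 := by intro h; nlinarith
    have h3 : (k : ℚ) - (i : ℚ) ≠ 0 := by intro h; nlinarith
    have h4 : (k : ℚ) - (i : ℚ) - 1 ≠ 0 := by intro h; nlinarith
    have h5 : (k : ℚ) - 2 ≠ 0 := by intro h; nlinarith
    field_simp
    ring
  rw [Finset.sum_congr rfl key, Finset.sum_add_distrib, reflect_aux k hk g]
  have hsplit : ∑ i ∈ Icc 2 (k - 2), g i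
      = (∑ i ∈ Icc 2 (k - 2), 1 / ((i : ℚ) * ((i : ℚ) - 1)))
        + (2 / ((k : ℚ) - 2)) * ∑ i ∈ Icc 2 (k - 2), 1 / ((i : ℚ) - 1) := by
    rw [Finset.mul_sum, ← Finset.sum_add_distrib]
  have hn : ((k - 2 : ℕ) : ℚ) = (k : ℚ) - 2 := by
    rw [Nat.cast_sub (by omega)]; norm_num
  have h1 := tele_aux (k - 2) (by omega)
  have h2 := harm_aux (k - 2) (by omega)
  rw [hn] at h1 h2
  have hm : (0 : ℚ) < (k : ℚ) - 2 := by linarith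
  have hb : ∑ i ∈ Icc 2 (k - 2), g i ≤ 2 := by
    rw [hsplit, h1]
    have : (2 / ((k : ℚ) - 2)) * ∑ i ∈ Icc 2 (k - 2), 1 / ((i : ℚ) - 1)
        ≤ (2 / ((k : ℚ) - 2)) * (((k : ℚ) - 2) / 2) := by
      apply mul_le_mul_of_nonneg_left h2 (by positivity)
    have heq : (2 / ((k : ℚ) - 2)) * (((k : ℚ) - 2) / 2) = 1 := by
      field_simp
    have hinv : 0 < 1 / ((k : ℚ) - 2) := by positivity
    linarith [this, heq ▸ this]
  linarith
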